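/- Let X ∈ ℝ^{k×m} be a full-rank matrix with k ≥ m ≥ 2, let c > 0, let B = 1ₘ1ₘᵀ be the m×m all-ones matrix, let g = trace(B(XᵀX)⁻¹) and λ = 1/(1 + cg). Then X(XᵀX + cB)⁻¹1ₘ = λ · X(XᵀX)⁻¹1ₘ, and the vector X(XᵀX)⁻¹1ₘ is an eigenvector of the matrix X(XᵀX + cB)⁻¹Xᵀ with eigenvalue λ. -/

import Mathlib

open Matrix

/-- paper's Corollary A.1: for full-rank `X ∈ ℝ^{k×m}` with `k ≥ m ≥ 2`,
`c > 0`, `B = 1ₘ1ₘᵀ`, `g = trace(B(XᵀX)⁻¹)` and `λ = 1/(1 + cg)`, one has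
`X(XᵀX + cB)⁻¹1ₘ = λ · X(XᵀX)⁻¹1ₘ`, and `X(XᵀX)⁻¹1ₘ` is an eigenvector of
`X(XᵀX + cB)⁻¹Xᵀ` with eigenvalue `λ`. -/
theorem eigenvector_of_projection_like_matrix (k m : ℕ) (hm : 2 ≤ m) (hk : m ≤ k)
    (X : Matrix (Fin k) (Fin m) ℝ) (hX : X.rank = m)
    (c : ℝ) (hc : 0 < c) :
    ∀ (B : Matrix (Fin m) (Fin m) ℝ) (g lam : ℝ),
      B = Matrix.of (fun _ _ => (1 : ℝ)) →
      g = (B * (Xᵀ * X)⁻¹).trace →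
      lam = 1 / (1 + c * g) →
      ((X * (Xᵀ * X + c • B)⁻¹) *ᵥ (fun _ => (1 : ℝ)) =
          lam • ((X * (Xᵀ * X)⁻¹) *ᵥ (fun _ => (1 : ℝ))) ∧
        Module.End.HasEigenvector (Matrix.toLin' (X * (Xᵀ * X + c • B)⁻¹ * Xᵀ)) lam
          ((X * (Xᵀ * X)⁻¹) *ᵥ (fun _ => (1 : ℝ)))) := by
  intro B g lam hB hg hlam
  have hm0 : 0 < m := lt_of_lt_of_le (by norm_num) hm
  set A : Matrix (Fin m) (Fin m) ℝ := Xᵀ * X with hA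
  -- X has trivial kernel
  have hker : LinearMap.ker X.mulVecLin = ⊥ := by
    have h1 : X.rank + Module.finrank ℝ (LinearMap.ker X.mulVecLin) = m := by
      simpa [Matrix.rank] using LinearMap.finrank_range_add_finrank_ker X.mulVecLin
    rw [hX] at h1
    have : Module.finrank ℝ (LinearMap.ker X.mulVecLin) = 0 := by omega
    exact Submodule.finrank_eq_zero.mp this
  have hXinj : ∀ x : Fin m → ℝ, x ≠ 0 → X *ᵥ x ≠ 0 := by
    intro x hx h0
    exact hx (LinearMap.ker_eq_bot.mp hker (by simpa [Matrix.mulVecLin_apply] using h0))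
  -- A = XᵀX is positive definite
  have hApd : A.PosDef := by
    refine Matrix.posDef_iff_dotProduct_mulVec.2 ⟨?_, fun x hx => ?_⟩
    · have := Matrix.isHermitian_conjTranspose_mul_self X
      simpa [Matrix.conjTranspose_eq_transpose_of_trivial] using this
    · have : star x ⬝ᵥ (A *ᵥ x) = (X *ᵥ x) ⬝ᵥ (X *ᵥ x) := by
        rw [← Matrix.mulVec_mulVec, Matrix.dotProduct_mulVec, Matrix.vecMul_transpose]
        simp
      rw [this]
      rcases (dotProduct_self_eq_zero (v := X *ᵥ x)).ne.mpr
        (fun h => hXinj x hx h) with h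
      have hnn : 0 ≤ (X *ᵥ x) ⬝ᵥ (X *ᵥ x) :=
        Finset.sum_nonneg fun i _ => mul_self_nonneg _
      rcases hnn.lt_or_eq with h1 | h1
      · exact h1
      · exact absurd h1.symm h
  have hAunit : IsUnit A := hApd.isUnit
  have hAinv : A * A⁻¹ = 1 := Matrix.mul_nonsing_inv A ((Matrix.isUnit_iff_isUnit_det A).mp hAunit)
  -- B is positive semidefinite
  have hBpsd : (c • B).PosSemidef := by
    refine Matrix.posSemidef_iff_dotProduct_mulVec.2 ⟨?_, fun x => ?_⟩
    · subst hB
      ext i j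
      simp [Matrix.conjTranspose, Matrix.transpose]
    · have hBv : (c • B) *ᵥ x = fun _ => c * (∑ j, x j) := by
        ext i
        simp [hB, Matrix.mulVec, dotProduct, Finset.mul_sum]
      rw [hBv]
      have : star x ⬝ᵥ (fun _ => c * (∑ j, x j)) = c * (∑ j, x j) ^ 2 := by
        simp only [dotProduct, Pi.star_apply, star_trivial, sq]
        rw [← Finset.sum_mul]
        ring
      rw [this]
      positivity
  have hSpd : (A + c • B).PosDef := hApd.add_posSemidef hBpsd
  have hSunit : IsUnit (A + c • B) := hSpd.isUnit
  have hSinv : (A + c • B)⁻¹ * (A + c • B) = 1 :=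
    Matrix.nonsing_inv_mul _ ((Matrix.isUnit_iff_isUnit_det _).mp hSunit)
  -- the all-ones vector
  set e : Fin m → ℝ := fun _ => (1 : ℝ) with he
  have he0 : e ≠ 0 := by
    intro h
    have := congrFun h ⟨0, hm0⟩
    simp [he] at this
  -- g equals eᵀ A⁻¹ e
  have hg' : g = e ⬝ᵥ (A⁻¹ *ᵥ e) := by
    rw [hg, hB]
    simp only [Matrix.trace, Matrix.diag, Matrix.mul_apply, dotProduct, Matrix.mulVec,
      Matrix.of_apply, he, one_mul, mul_one]
    rw [Finset.sum_comm]
  -- g > 0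
  have hgpos : 0 < g := by
    rw [hg']
    have := (Matrix.posDef_iff_dotProduct_mulVec.1 hApd.inv).2 he0
    simpa [he] using this
  have hden : (1 : ℝ) + c * g ≠ 0 := by positivity
  have hlam1 : lam * (1 + c * g) = 1 := by
    rw [hlam]; field_simp
  -- B *ᵥ (A⁻¹ *ᵥ e) = g • e
  have hBmul : B *ᵥ (A⁻¹ *ᵥ e) = g • e := by
    subst hB
    ext i
    simp [Matrix.mulVec, dotProduct, hg', he]
  -- key identity : (A + c•B) *ᵥ (lam • (A⁻¹ *ᵥ e)) = e
  have hkey : (A + c • B) *ᵥ (lam • (A⁻¹ *ᵥ e)) = e := by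
    rw [Matrix.mulVec_smul, Matrix.add_mulVec, Matrix.smul_mulVec, hBmul,
      Matrix.mulVec_mulVec, hAinv]
    ext i
    simp [he]
    nlinarith [hlam1]
  have hinv1 : (A + c • B)⁻¹ *ᵥ e = lam • (A⁻¹ *ᵥ e) := by
    calc (A + c • B)⁻¹ *ᵥ e
        = (A + c • B)⁻¹ *ᵥ ((A + c • B) *ᵥ (lam • (A⁻¹ *ᵥ e))) := by rw [hkey]
      _ = ((A + c • B)⁻¹ * (A + c • B)) *ᵥ (lam • (A⁻¹ *ᵥ e)) := by
          rw [Matrix.mulVec_mulVec]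
      _ = lam • (A⁻¹ *ᵥ e) := by rw [hSinv, Matrix.one_mulVec]
  -- part 1
  have part1 : (X * (A + c • B)⁻¹) *ᵥ e = lam • ((X * A⁻¹) *ᵥ e) := by
    rw [← Matrix.mulVec_mulVec, hinv1, Matrix.mulVec_smul, Matrix.mulVec_mulVec]
  refine ⟨part1, ?_⟩
  -- v ≠ 0
  set v : Fin k → ℝ := (X * A⁻¹) *ᵥ e with hv
  have hXv : Xᵀ *ᵥ v = e := by
    rw [hv, Matrix.mulVec_mulVec, ← Matrix.mul_assoc, ← hA, hAinv, Matrix.one_mulVec]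
  have hv0 : v ≠ 0 := by
    intro h
    rw [h] at hXv
    simp [Matrix.mulVec_zero] at hXv
    exact he0 hXv.symm
  constructor
  · rw [Module.End.mem_eigenspace_iff, Matrix.toLin'_apply]
    calc (X * (A + c • B)⁻¹ * Xᵀ) *ᵥ v
        = (X * (A + c • B)⁻¹) *ᵥ (Xᵀ *ᵥ v) := by
          rw [← Matrix.mulVec_mulVec]
      _ = (X * (A + c • B)⁻¹) *ᵥ e := by rw [hXv]
      _ = lam • v := part1
  · exact hv0
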